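/- Let 0 < ρ < 1 and A = ρ·J_n(1) (Jordan block with eigenvalue 1 scaled by ρ, i.e. ρ on diagonal and superdiagonal) and H = ρ·e_n. Then the distance to uncontrollability satisfies 2ρ/(n+1) ≤ d(A,H) ≤ πρ/(n+1) for all n ≥ 1. -/

import Mathlib

open Matrix Real

/-- Least singular value of a matrix `B` with `n` rows:
`σ_min(B) = inf { ‖Bᴴ v‖ : ‖v‖ = 1 }`. -/
noncomputable def sigmaMin {n : ℕ} {m : Type*} [Fintype m] (B : Matrix (Fin n) m ℂ) : ℝ :=
  sInf {x : ℝ | ∃ v : EuclideanSpace ℂ (Fin n), ‖v‖ = 1 ∧ x = ‖Matrix.toEuclideanLin Bᴴ v‖}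

/-- Eising's distance to uncontrollability:
`d(A,H) = inf_{s ∈ ℂ} σ_min [A - sI, H]`. -/
noncomputable def distUnc {n r : ℕ} (A : Matrix (Fin n) (Fin n) ℂ)
    (H : Matrix (Fin n) (Fin r) ℂ) : ℝ :=
  ⨅ s : ℂ, sigmaMin (Matrix.fromCols (A - s • (1 : Matrix (Fin n) (Fin n) ℂ)) H)

/-- The matrix `ρ·J_n(1)`: `ρ` on the diagonal and superdiagonal, zeros elsewhere. -/
def rhoJordan (n : ℕ) (ρ : ℝ) : Matrix (Fin n) (Fin n) ℂ :=
  Matrix.of fun i j =>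
    if (i : ℕ) = (j : ℕ) ∨ (j : ℕ) = (i : ℕ) + 1 then (ρ : ℂ) else 0

namespace IntegratorAux

open Finset

/-! ### Elementary trigonometric identities -/

lemma trig_rec (x : ℝ) (k : ℕ) :
    Real.sin ((k:ℝ)*x) + Real.sin (((k:ℝ)+2)*x) = 2 * Real.cos x * Real.sin (((k:ℝ)+1)*x) := by
  have h1 := Real.sin_add (((k:ℝ)+1)*x) x
  have h2 := Real.sin_sub (((k:ℝ)+1)*x) x
  have e1 : (k:ℝ)*x = ((k:ℝ)+1)*x - x := by ring
  have e2 : ((k:ℝ)+2)*x = ((k:ℝ)+1)*x + x := by ring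
  rw [e1, e2, h1, h2]; ring

lemma cross_id (x : ℝ) (m : ℕ) :
    Real.cos x * Real.sin (((m:ℝ)+1)*x) - Real.sin ((m:ℝ)*x)
      = Real.sin x * Real.cos (((m:ℝ)+1)*x) := by
  have e1 : (m:ℝ)*x = ((m:ℝ)+1)*x - x := by ring
  rw [e1, Real.sin_sub]; ring

/-! ### The path-graph spectral bound -/

lemma path_bound {n : ℕ} (hn : 1 ≤ n) (a : ℕ → ℝ)
    (h0 : ∀ j, n ≤ j → a j = 0) :
    ∑ j ∈ range n, a j * a (j+1) ≤
      Real.cos (π / (n+1)) * ∑ j ∈ range n, (a j)^2 := by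
  set α := π / (n+1) with hα
  have hn1 : (0:ℝ) < (n:ℝ) + 1 := by positivity
  have hα0 : 0 < α := by rw [hα]; positivity
  set s : ℕ → ℝ := fun k => Real.sin (k * α) with hs
  have hlt : ∀ k : ℕ, k ≤ n + 1 → (k:ℝ) * α ≤ π := by
    intro k hk
    have : (k:ℝ) ≤ (n:ℝ) + 1 := by exact_mod_cast hk
    calc (k:ℝ) * α ≤ ((n:ℝ)+1) * α := by
          apply mul_le_mul_of_nonneg_right this hα0.le
      _ = π := by rw [hα]; field_simp
  have hspos : ∀ k, 1 ≤ k → k ≤ n → 0 < s k := by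
    intro k h1 h2
    apply Real.sin_pos_of_pos_of_lt_pi
    · have : (1:ℝ) ≤ (k:ℝ) := by exact_mod_cast h1
      nlinarith
    · have hklt : (k:ℝ) < (n:ℝ) + 1 := by
        have : (k:ℝ) ≤ (n:ℝ) := by exact_mod_cast h2
        linarith
      calc (k:ℝ) * α < ((n:ℝ)+1) * α := by apply mul_lt_mul_of_pos_right hklt hα0
        _ = π := by rw [hα]; field_simp
  have hsnn : ∀ k, k ≤ n + 1 → 0 ≤ s k := fun k hk =>
    Real.sin_nonneg_of_nonneg_of_le_pi (by positivity) (hlt k hk)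
  have hrec : ∀ k : ℕ, s k + s (k+2) = 2 * Real.cos α * s (k+1) := by
    intro k
    have := trig_rec α k
    simp only [hs]; push_cast
    convert this using 3
  have hs0 : s 0 = 0 := by simp [hs]
  have term : ∀ j ∈ range n,
      a j * a (j+1) ≤ s (j+2) / s (j+1) / 2 * (a j)^2 + s (j+1) / s (j+2) / 2 * (a (j+1))^2 := by
    intro j hj
    rw [mem_range] at hj
    by_cases hjn : j + 1 < n
    · have hp : 0 < s (j+1) := hspos _ (by omega) (by omega)
      have hq : 0 < s (j+2) := hspos _ (by omega) (by omega)
      rw [← sub_nonneg]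
      have heq : s (j+2) / s (j+1) / 2 * (a j)^2 + s (j+1) / s (j+2) / 2 * (a (j+1))^2
          - a j * a (j+1)
          = ((s (j+2) * a j - s (j+1) * a (j+1))^2
              + 2 * s (j+1) * s (j+2) * a j * a (j+1)
              - 2 * s (j+1) * s (j+2) * a j * a (j+1)) / (2 * s (j+1) * s (j+2)) := by
        field_simp; ring
      rw [heq]
      have : (s (j+2) * a j - s (j+1) * a (j+1))^2
              + 2 * s (j+1) * s (j+2) * a j * a (j+1)
              - 2 * s (j+1) * s (j+2) * a j * a (j+1)
          = (s (j+2) * a j - s (j+1) * a (j+1))^2 := by ring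
      rw [this]; positivity
    · have hz : a (j+1) = 0 := h0 _ (by omega)
      have hp : 0 < s (j+1) := hspos _ (by omega) (by omega)
      have hq : 0 ≤ s (j+2) := hsnn _ (by omega)
      rw [hz]
      have : a j * 0 = 0 := by ring
      rw [this]
      positivity
  have step1 : ∑ j ∈ range n, a j * a (j+1) ≤
      ∑ j ∈ range n, (s (j+2) / s (j+1) / 2 * (a j)^2 + s (j+1) / s (j+2) / 2 * (a (j+1))^2) :=
    Finset.sum_le_sum term
  set f2 : ℕ → ℝ := fun k => s k / s (k+1) / 2 * (a k)^2 with hf2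
  have shift : ∑ j ∈ range n, f2 (j+1) = ∑ j ∈ range n, f2 j := by
    have h1 := Finset.sum_range_succ' f2 n
    have h2 := Finset.sum_range_succ f2 n
    have hf20 : f2 0 = 0 := by simp [hf2, hs0]
    have hf2n : f2 n = 0 := by simp [hf2, h0 n le_rfl]
    rw [hf20, add_zero] at h1
    rw [hf2n, add_zero] at h2
    linarith
  have step2 : ∑ j ∈ range n,
        (s (j+2) / s (j+1) / 2 * (a j)^2 + s (j+1) / s (j+2) / 2 * (a (j+1))^2)
      = ∑ j ∈ range n, (s (j+2) / s (j+1) / 2 * (a j)^2) + ∑ j ∈ range n, f2 j := by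
    rw [Finset.sum_add_distrib, shift]
  have step3 : ∑ j ∈ range n, (s (j+2) / s (j+1) / 2 * (a j)^2) + ∑ j ∈ range n, f2 j
      = ∑ j ∈ range n, Real.cos α * (a j)^2 := by
    rw [← Finset.sum_add_distrib]
    apply Finset.sum_congr rfl
    intro j hj
    rw [mem_range] at hj
    have hp : 0 < s (j+1) := hspos _ (by omega) (by omega)
    have hr := hrec j
    simp only [hf2]
    field_simp
    nlinarith [hr]
  calc ∑ j ∈ range n, a j * a (j+1) ≤ _ := step1
    _ = _ := step2
    _ = ∑ j ∈ range n, Real.cos α * (a j)^2 := step3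
    _ = Real.cos α * ∑ j ∈ range n, (a j)^2 := by rw [Finset.mul_sum]

/-- `predr a m = a (m-1)` with `predr a 0 = 0`. -/
def predr (a : ℕ → ℝ) : ℕ → ℝ := fun m => match m with | 0 => 0 | (k+1) => a k

lemma quad_low {n : ℕ} (hn : 1 ≤ n) {ρ t : ℝ} (hρ : 0 < ρ) (ht : 0 ≤ t) (a : ℕ → ℝ)
    (ha : ∀ j, 0 ≤ a j) (h0 : ∀ j, n ≤ j → a j = 0)
    (hnorm : ∑ j ∈ range n, (a j)^2 = 1) :
    ρ^2 * Real.sin (π/(n+1))^2 ≤ ∑ m ∈ range (n+1), (t * a m - ρ * predr a m)^2 := by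
  have SA : ∑ m ∈ range (n+1), (a m)^2 = 1 := by
    rw [Finset.sum_range_succ, h0 n le_rfl]
    simpa using hnorm
  have SW : ∑ m ∈ range (n+1), (predr a m)^2 = 1 := by
    rw [Finset.sum_range_succ' (fun m => (predr a m)^2) n]
    simpa [predr] using hnorm
  have SC : ∑ m ∈ range (n+1), a m * predr a m = ∑ k ∈ range n, a (k+1) * a k := by
    rw [Finset.sum_range_succ' (fun m => a m * predr a m) n]
    simp [predr]
  have hT0 : 0 ≤ ∑ k ∈ range n, a (k+1) * a k :=
    Finset.sum_nonneg fun k _ => mul_nonneg (ha _) (ha _)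
  have hTc : ∑ k ∈ range n, a (k+1) * a k ≤ Real.cos (π/(n+1)) := by
    have := path_bound hn a h0
    rw [hnorm, mul_one] at this
    calc ∑ k ∈ range n, a (k+1) * a k = ∑ k ∈ range n, a k * a (k+1) := by
          apply Finset.sum_congr rfl; intro k _; ring
      _ ≤ _ := this
  have expand : ∑ m ∈ range (n+1), (t * a m - ρ * predr a m)^2
      = t^2 * (∑ m ∈ range (n+1), (a m)^2) + ρ^2 * (∑ m ∈ range (n+1), (predr a m)^2)
        - 2*t*ρ * (∑ m ∈ range (n+1), a m * predr a m) := by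
    rw [Finset.mul_sum, Finset.mul_sum, Finset.mul_sum, ← Finset.sum_add_distrib,
      ← Finset.sum_sub_distrib]
    apply Finset.sum_congr rfl
    intro m _; ring
  rw [expand, SA, SW, SC, mul_one, mul_one]
  set T := ∑ k ∈ range n, a (k+1) * a k
  set c := Real.cos (π/(n+1))
  have hpyth := Real.sin_sq_add_cos_sq (π/(n+1))
  nlinarith [sq_nonneg (t - ρ*c), mul_nonneg (mul_nonneg ht hρ.le) (sub_nonneg.2 hTc)]

/-! ### Bridging to the matrix norm -/

def extv {n : ℕ} (v : EuclideanSpace ℂ (Fin n)) : ℕ → ℂ :=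
  fun k => if h : k < n then v ⟨k, h⟩ else 0

def predc (y : ℕ → ℂ) : ℕ → ℂ := fun m => match m with | 0 => 0 | (k+1) => y k

lemma entry_eq {n : ℕ} (ρ : ℝ) (s : ℂ) (i j : Fin n) :
    (rhoJordan n ρ - s • (1 : Matrix (Fin n) (Fin n) ℂ)) i j
      = ((ρ:ℂ) - s) * (if (i:ℕ) = (j:ℕ) then 1 else 0)
        + (ρ:ℂ) * (if (j:ℕ) = (i:ℕ)+1 then 1 else 0) := by
  simp only [Matrix.sub_apply, Matrix.smul_apply, Matrix.one_apply, rhoJordan,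
    Matrix.of_apply, smul_eq_mul, Fin.ext_iff]
  split_ifs <;> first | omega | ring

lemma bridge {n : ℕ} (hn : 1 ≤ n) (ρ : ℝ) (s : ℂ) (v : EuclideanSpace ℂ (Fin n)) :
    ‖Matrix.toEuclideanLin (Matrix.fromCols
        (rhoJordan n ρ - s • (1 : Matrix (Fin n) (Fin n) ℂ))
        (Matrix.of fun i (_ : Fin 1) => if (i : ℕ) = n - 1 then (ρ:ℂ) else 0))ᴴ v‖ ^ 2
      = ∑ m ∈ range (n+1),
          ‖(starRingEnd ℂ) ((ρ:ℂ) - s) * extv v m + (ρ:ℂ) * predc (extv v) m‖ ^ 2 := by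
  set c := (starRingEnd ℂ) ((ρ:ℂ) - s) with hc
  set y := extv v with hy
  set B := Matrix.fromCols (rhoJordan n ρ - s • (1 : Matrix (Fin n) (Fin n) ℂ))
      (Matrix.of fun i (_ : Fin 1) => if (i : ℕ) = n - 1 then (ρ:ℂ) else 0) with hB
  have hu : ∀ i : Fin n, v i = y (i:ℕ) := by
    intro i; simp [hy, extv, i.isLt]
  have claim1 : ∀ j : Fin n,
      (Bᴴ *ᵥ (WithLp.equiv 2 (Fin n → ℂ)) v) (Sum.inl j)
        = c * y (j:ℕ) + (ρ:ℂ) * predc y (j:ℕ) := by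
    intro j
    have : ∀ i : Fin n, Bᴴ (Sum.inl j) i * v i
        = (if i = j then c * y (i:ℕ) else 0)
          + (if (j:ℕ) = (i:ℕ)+1 then (ρ:ℂ) * y (i:ℕ) else 0) := by
      intro i
      rw [Matrix.conjTranspose_apply, hB, Matrix.fromCols_apply_inl, entry_eq, hu i]
      simp only [star_add, star_mul', apply_ite (star : ℂ → ℂ), star_one, star_zero,
        Complex.star_def, Complex.conj_ofReal, Fin.ext_iff]
      split_ifs <;> first | omega | ring
    have hmv : (Bᴴ *ᵥ (WithLp.equiv 2 (Fin n → ℂ)) v) (Sum.inl j)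
        = ∑ i : Fin n, Bᴴ (Sum.inl j) i * v i := rfl
    rw [hmv, Finset.sum_congr rfl (fun i _ => this i), Finset.sum_add_distrib]
    congr 1
    · rw [Finset.sum_ite_eq' univ j (fun i => c * y (i:ℕ))]
      simp
    · have hterm : ∀ i : Fin n,
          (if (j:ℕ) = (i:ℕ)+1 then (ρ:ℂ) * y (i:ℕ) else 0)
            = (fun k => if (j:ℕ) = k+1 then (ρ:ℂ) * y k else 0) (i:ℕ) := fun i => rfl
      rw [Finset.sum_congr rfl (fun i _ => hterm i),
        Fin.sum_univ_eq_sum_range (fun k => if (j:ℕ) = k+1 then (ρ:ℂ) * y k else 0) n]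
      rcases hj : (j:ℕ) with _ | k₀
      · simp [predc]
      · have hk₀ : k₀ < n := by have := j.isLt; omega
        have : ∀ k, (if k₀+1 = k+1 then (ρ:ℂ) * y k else 0)
            = (if k₀ = k then (ρ:ℂ) * y k else 0) := by
          intro k; simp
        rw [Finset.sum_congr rfl (fun k _ => this k),
          Finset.sum_ite_eq (range n) k₀ (fun k => (ρ:ℂ) * y k)]
        simp [predc, hk₀]
  have claim2 : ∀ b : Fin 1,
      (Bᴴ *ᵥ (WithLp.equiv 2 (Fin n → ℂ)) v) (Sum.inr b) = (ρ:ℂ) * predc y n := by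
    intro b
    have hmv : (Bᴴ *ᵥ (WithLp.equiv 2 (Fin n → ℂ)) v) (Sum.inr b)
        = ∑ i : Fin n, Bᴴ (Sum.inr b) i * v i := rfl
    have hterm : ∀ i : Fin n, Bᴴ (Sum.inr b) i * v i
        = (fun k => if k = n-1 then (ρ:ℂ) * y k else 0) (i:ℕ) := by
      intro i
      rw [Matrix.conjTranspose_apply, hB, Matrix.fromCols_apply_inr, hu i]
      simp only [Matrix.of_apply, apply_ite (star : ℂ → ℂ), star_zero,
        Complex.star_def, Complex.conj_ofReal]
      split_ifs <;> simp
    rw [hmv, Finset.sum_congr rfl (fun i _ => hterm i),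
      Fin.sum_univ_eq_sum_range (fun k => if k = n-1 then (ρ:ℂ) * y k else 0) n,
      Finset.sum_ite_eq' (range n) (n-1) (fun k => (ρ:ℂ) * y k)]
    have h1 : n - 1 ∈ range n := by rw [mem_range]; omega
    rw [if_pos h1]
    have h2 : n = (n-1)+1 := by omega
    rw [h2]
    rfl
  rw [Matrix.toEuclideanLin_apply, EuclideanSpace.norm_eq]
  rw [Real.sq_sqrt (Finset.sum_nonneg fun i _ => by positivity)]
  have happ : ∀ i, (WithLp.toLp 2
      (Bᴴ *ᵥ v.ofLp)).ofLp i
        = (Bᴴ *ᵥ (WithLp.equiv 2 (Fin n → ℂ)) v) i := fun i => rfl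
  rw [Finset.sum_congr rfl (fun i _ => by rw [happ i])]
  rw [Fintype.sum_sum_type]
  rw [Finset.sum_range_succ]
  congr 1
  · have : ∀ j : Fin n, ‖(Bᴴ *ᵥ (WithLp.equiv 2 (Fin n → ℂ)) v) (Sum.inl j)‖^2
        = (fun m => ‖c * y m + (ρ:ℂ) * predc y m‖^2) (j:ℕ) := by
      intro j; rw [claim1 j]
    rw [Finset.sum_congr rfl (fun j _ => this j),
      Fin.sum_univ_eq_sum_range (fun m => ‖c * y m + (ρ:ℂ) * predc y m‖^2) n]
  · have hyn : y n = 0 := by simp [hy, extv]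
    rw [Fin.sum_univ_one, claim2 0, hyn, mul_zero, zero_add]

/-! ### Trigonometric sums -/

lemma alpha_pi {n : ℕ} (hn : 1 ≤ n) : ((n:ℝ)+1) * (π/((n:ℝ)+1)) = π := by
  have : ((n:ℝ)+1) ≠ 0 := by positivity
  field_simp

lemma geo_sum {n : ℕ} (hn : 1 ≤ n) :
    ∑ j ∈ range n, Real.cos (2*((j:ℝ)+1)*(π/((n:ℝ)+1))) = -1 := by
  set α := π/((n:ℝ)+1) with hα
  have hα0 : 0 < α := by rw [hα]; positivity
  have hαπ : α < π := by
    rw [hα, div_lt_iff₀ (by positivity)]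
    nlinarith [Real.pi_pos, (by exact_mod_cast hn : (1:ℝ) ≤ (n:ℝ))]
  have hsα : 0 < Real.sin α := Real.sin_pos_of_pos_of_lt_pi hα0 hαπ
  set f : ℕ → ℝ := fun j => Real.sin ((2*(j:ℝ)+1)*α) with hf
  have key : ∀ j : ℕ, Real.cos (2*((j:ℝ)+1)*α) * (2 * Real.sin α) = f (j+1) - f j := by
    intro j
    simp only [hf]
    push_cast
    have e1 : (2*((j:ℝ)+1)+1)*α = 2*((j:ℝ)+1)*α + α := by ring
    have e2 : (2*(j:ℝ)+1)*α = 2*((j:ℝ)+1)*α - α := by ring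
    rw [e1, e2, Real.sin_add, Real.sin_sub]
    ring
  have tele : ∑ j ∈ range n, (f (j+1) - f j) = f n - f 0 := Finset.sum_range_sub f n
  have hfn : f n = - Real.sin α := by
    simp only [hf]
    have e : (2*(n:ℝ)+1)*α = 2*π - α := by
      rw [hα]; field_simp; ring
    rw [e, Real.sin_sub, Real.sin_two_pi, Real.cos_two_pi]
    ring
  have hf0 : f 0 = Real.sin α := by
    simp only [hf]; norm_num
  have : (∑ j ∈ range n, Real.cos (2*((j:ℝ)+1)*α)) * (2 * Real.sin α)
      = - Real.sin α - Real.sin α := by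
    rw [Finset.sum_mul]
    rw [Finset.sum_congr rfl (fun j _ => key j), tele, hfn, hf0]
  have h2 : (2 : ℝ) * Real.sin α ≠ 0 := by positivity
  field_simp at this
  nlinarith [this, hsα]

lemma sin2_sum {n : ℕ} (hn : 1 ≤ n) :
    ∑ j ∈ range n, (Real.sin (((j:ℝ)+1)*(π/((n:ℝ)+1))))^2 = ((n:ℝ)+1)/2 := by
  have h : ∀ j : ℕ, (Real.sin (((j:ℝ)+1)*(π/((n:ℝ)+1))))^2
      = 1/2 - Real.cos (2*((j:ℝ)+1)*(π/((n:ℝ)+1)))/2 := by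
    intro j
    rw [Real.sin_sq, Real.cos_sq,
      show 2*(((j:ℝ)+1)*(π/((n:ℝ)+1))) = 2*((j:ℝ)+1)*(π/((n:ℝ)+1)) from by ring]
    ring
  rw [Finset.sum_congr rfl (fun j _ => h j), Finset.sum_sub_distrib]
  rw [← Finset.sum_div, ← Finset.sum_div, geo_sum hn]
  simp
  ring

lemma cos2_sum {n : ℕ} (hn : 1 ≤ n) :
    ∑ m ∈ range (n+1), (Real.cos (((m:ℝ)+1)*(π/((n:ℝ)+1))))^2 = ((n:ℝ)+1)/2 := by
  rw [Finset.sum_range_succ]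
  have e : (((n:ℕ):ℝ)+1)*(π/((n:ℝ)+1)) = π := alpha_pi hn
  rw [e, Real.cos_pi]
  have h2 : ∑ m ∈ range n, (Real.cos (((m:ℝ)+1)*(π/((n:ℝ)+1))))^2
      = ∑ m ∈ range n, (1 - (Real.sin (((m:ℝ)+1)*(π/((n:ℝ)+1))))^2) := by
    apply Finset.sum_congr rfl
    intro m _
    rw [Real.cos_sq']
  rw [h2, Finset.sum_sub_distrib, sin2_sum hn]
  simp
  ring

end IntegratorAux

open IntegratorAux Finset in
theorem integrator_distance_linear_degradation {n : ℕ} (hn : 1 ≤ n) (ρ : ℝ)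
    (hρ0 : 0 < ρ) (hρ1 : ρ < 1) :
    2 * ρ / (n + 1) ≤ distUnc (rhoJordan n ρ)
        (Matrix.of fun i (_ : Fin 1) => if (i : ℕ) = n - 1 then (ρ : ℂ) else 0) ∧
    distUnc (rhoJordan n ρ)
        (Matrix.of fun i (_ : Fin 1) => if (i : ℕ) = n - 1 then (ρ : ℂ) else 0) ≤
      π * ρ / (n + 1) := by
  set α := π / ((n:ℝ)+1) with hα
  have hn1 : (0:ℝ) < (n:ℝ) + 1 := by positivity
  have hα0 : 0 < α := by rw [hα]; positivity
  have hαπ : α < π := by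
    rw [hα, div_lt_iff₀ (by positivity)]
    nlinarith [Real.pi_pos, (by exact_mod_cast hn : (1:ℝ) ≤ (n:ℝ))]
  have hsα : 0 < Real.sin α := Real.sin_pos_of_pos_of_lt_pi hα0 hαπ
  set H : Matrix (Fin n) (Fin 1) ℂ :=
    Matrix.of fun i (_ : Fin 1) => if (i : ℕ) = n - 1 then (ρ : ℂ) else 0 with hH
  -- each sigmaMin is nonnegative
  have hσnn : ∀ s : ℂ, 0 ≤ sigmaMin (Matrix.fromCols
      (rhoJordan n ρ - s • (1 : Matrix (Fin n) (Fin n) ℂ)) H) := by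
    intro s
    apply Real.sInf_nonneg
    rintro x ⟨v, hv, rfl⟩
    exact norm_nonneg _
  have hbdd : ∀ s : ℂ, BddBelow {x : ℝ | ∃ v : EuclideanSpace ℂ (Fin n), ‖v‖ = 1 ∧
      x = ‖Matrix.toEuclideanLin (Matrix.fromCols
        (rhoJordan n ρ - s • (1 : Matrix (Fin n) (Fin n) ℂ)) H)ᴴ v‖} := by
    intro s
    refine ⟨0, ?_⟩
    rintro x ⟨v, hv, rfl⟩
    exact norm_nonneg _
  have hne : ∀ s : ℂ, Set.Nonempty {x : ℝ | ∃ v : EuclideanSpace ℂ (Fin n), ‖v‖ = 1 ∧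
      x = ‖Matrix.toEuclideanLin (Matrix.fromCols
        (rhoJordan n ρ - s • (1 : Matrix (Fin n) (Fin n) ℂ)) H)ᴴ v‖} := by
    intro s
    refine ⟨_, ⟨EuclideanSpace.single (⟨0, hn⟩ : Fin n) (1:ℂ), ?_, rfl⟩⟩
    rw [EuclideanSpace.norm_single]
    simp
  constructor
  · -- lower bound
    have key : ∀ s : ℂ, ρ * Real.sin α ≤ sigmaMin (Matrix.fromCols
        (rhoJordan n ρ - s • (1 : Matrix (Fin n) (Fin n) ℂ)) H) := by
      intro s
      apply le_csInf (hne s)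
      rintro x ⟨v, hv, rfl⟩
      set y := extv v with hy
      set a : ℕ → ℝ := fun k => ‖y k‖ with ha'
      have ha : ∀ j, 0 ≤ a j := fun j => norm_nonneg _
      have h0 : ∀ j, n ≤ j → a j = 0 := by
        intro j hj
        simp [ha', hy, extv, Nat.not_lt.mpr hj]
      have hnorm : ∑ j ∈ range n, (a j)^2 = 1 := by
        have h1 : ∑ i : Fin n, ‖v i‖^2 = ∑ j ∈ range n, (a j)^2 := by
          have : ∀ i : Fin n, ‖v i‖^2 = (fun k => (a k)^2) (i:ℕ) := by
            intro i
            simp [ha', hy, extv, i.isLt]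
          rw [Finset.sum_congr rfl (fun i _ => this i),
            Fin.sum_univ_eq_sum_range (fun k => (a k)^2) n]
        have h2 := EuclideanSpace.norm_eq v
        rw [hv] at h2
        have h3 : ∑ i : Fin n, ‖v i‖^2 = 1 := by
          have h4 : Real.sqrt (∑ i : Fin n, ‖v i‖^2) = 1 := h2.symm
          have h5 : (0:ℝ) ≤ ∑ i : Fin n, ‖v i‖^2 :=
            Finset.sum_nonneg fun i _ => by positivity
          nlinarith [Real.sq_sqrt h5]
        rw [← h1, h3]
      set c := (starRingEnd ℂ) ((ρ:ℂ) - s) with hc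
      set t := ‖c‖ with ht'
      have ht : 0 ≤ t := norm_nonneg _
      have pointwise : ∀ m, (t * a m - ρ * predr a m)^2
          ≤ ‖c * y m + (ρ:ℂ) * predc y m‖^2 := by
        intro m
        have hpred : ‖predc y m‖ = predr a m := by
          cases m with
          | zero => simp [predc, predr]
          | succ k => rfl
        have h := abs_norm_sub_norm_le (c * y m) (-((ρ:ℂ) * predc y m))
        rw [sub_neg_eq_add, norm_neg] at h
        have e1 : ‖c * y m‖ = t * a m := by rw [norm_mul]
        have e2 : ‖(ρ:ℂ) * predc y m‖ = ρ * predr a m := by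
          rw [norm_mul, hpred, Complex.norm_real, Real.norm_eq_abs, abs_of_pos hρ0]
        rw [e1, e2] at h
        calc (t * a m - ρ * predr a m)^2 = |t * a m - ρ * predr a m|^2 := (sq_abs _).symm
          _ ≤ ‖c * y m + (ρ:ℂ) * predc y m‖^2 := by
              apply pow_le_pow_left₀ (abs_nonneg _) h
      have hsum : ρ^2 * Real.sin α^2
          ≤ ∑ m ∈ range (n+1), ‖c * y m + (ρ:ℂ) * predc y m‖^2 := by
        calc ρ^2 * Real.sin α^2 ≤ ∑ m ∈ range (n+1), (t * a m - ρ * predr a m)^2 := by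
              rw [hα]; exact quad_low hn hρ0 ht a ha h0 hnorm
          _ ≤ _ := Finset.sum_le_sum fun m _ => pointwise m
      have hb := bridge hn ρ s v
      rw [← hH] at hb
      rw [← hc, ← hy] at hb
      rw [← hb] at hsum
      have h6 : (ρ * Real.sin α)^2 ≤ ‖Matrix.toEuclideanLin (Matrix.fromCols
          (rhoJordan n ρ - s • (1 : Matrix (Fin n) (Fin n) ℂ)) H)ᴴ v‖^2 := by
        calc (ρ * Real.sin α)^2 = ρ^2 * Real.sin α^2 := by ring
          _ ≤ _ := hsum
      have h7 := Real.sqrt_le_sqrt h6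
      rwa [Real.sqrt_sq (by positivity), Real.sqrt_sq (norm_nonneg _)] at h7
    have hlow : 2 * ρ / ((n:ℝ) + 1) ≤ ρ * Real.sin α := by
      have hhalf : α ≤ π/2 := by
        rw [hα, div_le_div_iff₀ (by positivity) (by norm_num)]
        nlinarith [Real.pi_pos, (by exact_mod_cast hn : (1:ℝ) ≤ (n:ℝ))]
      have hms := Real.mul_le_sin hα0.le hhalf
      have : 2/π * α = 2/((n:ℝ)+1) := by
        rw [hα]
        field_simp
      rw [this] at hms
      have := mul_le_mul_of_nonneg_left hms hρ0.le
      calc 2 * ρ / ((n:ℝ)+1) = ρ * (2/((n:ℝ)+1)) := by ring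
        _ ≤ ρ * Real.sin α := this
    exact le_ciInf fun s => le_trans hlow (key s)
  · -- upper bound
    set K := Real.sqrt (2/((n:ℝ)+1)) with hK
    have hK0 : 0 < K := by rw [hK]; positivity
    have hK2 : K^2 = 2/((n:ℝ)+1) := Real.sq_sqrt (by positivity)
    set s₀ : ℂ := ((ρ * (1 - Real.cos α) : ℝ) : ℂ) with hs₀
    set v₀ : EuclideanSpace ℂ (Fin n) := (WithLp.equiv 2 (Fin n → ℂ)).symm
      (fun i => (((-1:ℝ)^(i:ℕ) * Real.sin ((((i:ℕ):ℝ)+1)*α) * K : ℝ) : ℂ)) with hv₀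
    have hv₀app : ∀ i : Fin n,
        v₀ i = (((-1:ℝ)^(i:ℕ) * Real.sin ((((i:ℕ):ℝ)+1)*α) * K : ℝ) : ℂ) := fun i => rfl
    have hsinn1 : Real.sin (((n:ℝ)+1)*α) = 0 := by
      rw [hα, alpha_pi hn, Real.sin_pi]
    have hyform : ∀ m, m ≤ n → extv v₀ m
        = (((-1:ℝ)^m * Real.sin (((m:ℝ)+1)*α) * K : ℝ) : ℂ) := by
      intro m hm
      by_cases h : m < n
      · simp only [extv, dif_pos h]
        exact hv₀app ⟨m, h⟩
      · have hmn : m = n := by omega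
        subst hmn
        simp only [extv, dif_neg h]
        rw [hsinn1]
        norm_num
    have hc₀ : (starRingEnd ℂ) ((ρ:ℂ) - s₀) = ((ρ * Real.cos α : ℝ) : ℂ) := by
      rw [hs₀, show (ρ:ℂ) - ((ρ * (1 - Real.cos α) : ℝ) : ℂ)
        = ((ρ * Real.cos α : ℝ) : ℂ) from by push_cast; ring, Complex.conj_ofReal]
    have hval : ∀ m, m ≤ n →
        (starRingEnd ℂ) ((ρ:ℂ) - s₀) * extv v₀ m + (ρ:ℂ) * predc (extv v₀) m
          = ((ρ * K * (-1:ℝ)^m * (Real.sin α * Real.cos (((m:ℝ)+1)*α)) : ℝ) : ℂ) := by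
      intro m hm
      rw [hc₀, ← cross_id α m]
      cases m with
      | zero =>
        rw [hyform 0 (by omega)]
        simp only [predc]
        have h0 : Real.sin (((0:ℕ):ℝ)*α) = 0 := by norm_num
        rw [h0]
        push_cast
        ring
      | succ k =>
        rw [hyform (k+1) hm]
        simp only [predc]
        rw [hyform k (by omega)]
        push_cast
        ring
    have hterm : ∀ m, m ≤ n →
        ‖(starRingEnd ℂ) ((ρ:ℂ) - s₀) * extv v₀ m + (ρ:ℂ) * predc (extv v₀) m‖^2
          = (ρ * K * Real.sin α)^2 * (Real.cos (((m:ℝ)+1)*α))^2 := by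
      intro m hm
      rw [hval m hm, Complex.norm_real, Real.norm_eq_abs, sq_abs]
      have hsq : ((-1:ℝ)^m)^2 = 1 := by
        rw [← pow_mul]
        exact Even.neg_one_pow ⟨m, by ring⟩
      calc (ρ * K * (-1:ℝ)^m * (Real.sin α * Real.cos (((m:ℝ)+1)*α)))^2
          = (ρ * K * Real.sin α)^2 * (Real.cos (((m:ℝ)+1)*α))^2 * (((-1:ℝ)^m)^2) := by ring
        _ = (ρ * K * Real.sin α)^2 * (Real.cos (((m:ℝ)+1)*α))^2 := by rw [hsq, mul_one]
    have hv₀norm : ‖v₀‖ = 1 := by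
      rw [EuclideanSpace.norm_eq]
      have hpt : ∀ i : Fin n,
          ‖v₀ i‖^2 = (fun k => (Real.sin (((k:ℝ)+1)*α))^2 * K^2) (i:ℕ) := by
        intro i
        rw [hv₀app i, Complex.norm_real, Real.norm_eq_abs, sq_abs]
        have hsq : ((-1:ℝ)^(i:ℕ))^2 = 1 := by
          rw [← pow_mul]
          exact Even.neg_one_pow ⟨(i:ℕ), by ring⟩
        calc ((-1:ℝ)^(i:ℕ) * Real.sin ((((i:ℕ):ℝ)+1)*α) * K)^2
            = (Real.sin ((((i:ℕ):ℝ)+1)*α))^2 * K^2 * (((-1:ℝ)^(i:ℕ))^2) := by ring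
          _ = _ := by rw [hsq, mul_one]
      rw [Finset.sum_congr rfl (fun i _ => hpt i),
        Fin.sum_univ_eq_sum_range (fun k => (Real.sin (((k:ℝ)+1)*α))^2 * K^2) n,
        ← Finset.sum_mul, hα, sin2_sum hn, hK2,
        show ((n:ℝ)+1)/2 * (2/((n:ℝ)+1)) = 1 from by field_simp]
      exact Real.sqrt_one
    have hBnorm : ‖Matrix.toEuclideanLin (Matrix.fromCols
        (rhoJordan n ρ - s₀ • (1 : Matrix (Fin n) (Fin n) ℂ)) H)ᴴ v₀‖ = ρ * Real.sin α := by
      have hb := bridge hn ρ s₀ v₀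
      rw [← hH] at hb
      have hsum : ∑ m ∈ range (n+1), ‖(starRingEnd ℂ) ((ρ:ℂ) - s₀) * extv v₀ m
          + (ρ:ℂ) * predc (extv v₀) m‖^2 = (ρ * Real.sin α)^2 := by
        have hcg : ∀ m ∈ range (n+1),
            ‖(starRingEnd ℂ) ((ρ:ℂ) - s₀) * extv v₀ m + (ρ:ℂ) * predc (extv v₀) m‖^2
              = (fun k => (ρ * K * Real.sin α)^2 * (Real.cos (((k:ℝ)+1)*α))^2) m := by
          intro m hm
          rw [mem_range] at hm
          exact hterm m (by omega)
        rw [Finset.sum_congr rfl hcg, ← Finset.mul_sum]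
        rw [show (∑ k ∈ range (n+1), (Real.cos (((k:ℝ)+1)*α))^2) = ((n:ℝ)+1)/2 from by
          rw [hα]; exact cos2_sum hn]
        calc (ρ * K * Real.sin α)^2 * (((n:ℝ)+1)/2)
            = (ρ * Real.sin α)^2 * (K^2 * (((n:ℝ)+1)/2)) := by ring
          _ = (ρ * Real.sin α)^2 := by
              rw [hK2, show 2/((n:ℝ)+1) * (((n:ℝ)+1)/2) = 1 from by field_simp, mul_one]
      rw [hsum] at hb
      have := congrArg Real.sqrt hb
      rwa [Real.sqrt_sq (norm_nonneg _), Real.sqrt_sq (by positivity)] at this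
    have hup1 : distUnc (rhoJordan n ρ) H ≤ sigmaMin (Matrix.fromCols
        (rhoJordan n ρ - s₀ • (1 : Matrix (Fin n) (Fin n) ℂ)) H) := by
      apply ciInf_le
      refine ⟨0, ?_⟩
      rintro x ⟨s, rfl⟩
      exact hσnn s
    have hup2 : sigmaMin (Matrix.fromCols
        (rhoJordan n ρ - s₀ • (1 : Matrix (Fin n) (Fin n) ℂ)) H) ≤ ρ * Real.sin α := by
      rw [← hBnorm]
      apply csInf_le (hbdd s₀)
      exact ⟨v₀, hv₀norm, rfl⟩
    have hup3 : ρ * Real.sin α ≤ π * ρ / ((n:ℝ)+1) := by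
      have hsle := Real.sin_le hα0.le
      calc ρ * Real.sin α ≤ ρ * α := by nlinarith
        _ = π * ρ / ((n:ℝ)+1) := by rw [hα]; ring
    exact le_trans hup1 (le_trans hup2 hup3)
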